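/- A real 2×2×2 tensor T = ((a₁,a₂);(b₁,b₂)) has rank three if and only if Δ(T) < 0, or else the vectors (a₁;a₂), (b₁;b₂) in ℝ⁴ are linearly independent, the vectors (a₁;b₁), (a₂;b₂) in ℝ⁴ are linearly independent, Δ(T) = 0, and Θ(T) ≠ 0. -/

import Mathlib

open Matrix BigOperators

/-- Cayley hyperdeterminant (up to sign) of a 2×2×2 tensor given by matrix slices A, B. -/
noncomputable def Delta {F : Type*} [Field F] (A B : Matrix (Fin 2) (Fin 2) F) : F :=
  ((A + B).det - (A - B).det) ^ 2 / 4 - 4 * A.det * B.det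

/-- Rank of a 2×2×2 tensor, given as a pair of 2×2 matrix slices. -/
noncomputable def trank3 {F : Type*} [Field F] (T : Fin 2 → Matrix (Fin 2) (Fin 2) F) : ℕ :=
  sInf {r | ∃ u v w : Fin r → Fin 2 → F, ∀ k i j, T k i j = ∑ s, u s k * v s i * w s j}

/-- Rank of a 2×2×2×2 tensor, given as a 2×2 array of 2×2 matrix slices. -/
noncomputable def trank4 {F : Type*} [Field F] (T : Fin 2 → Fin 2 → Matrix (Fin 2) (Fin 2) F) : ℕ :=
  sInf {r | ∃ u v w z : Fin r → Fin 2 → F,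
    ∀ k l i j, T k l i j = ∑ s, u s k * v s l * w s i * z s j}

/-- The 2×2 matrix with columns u and v. -/
def col2 {F : Type*} [Field F] (u v : Fin 2 → F) : Matrix (Fin 2) (Fin 2) F :=
  Matrix.of fun i j => ![u, v] j i

private def dc (a₁ a₂ b₁ b₂ : Fin 2 → ℝ) (r : ℕ) : Prop :=
  ∃ u v w : Fin r → Fin 2 → ℝ, ∀ k i j,
    (![col2 a₁ a₂, col2 b₁ b₂] : Fin 2 → Matrix (Fin 2) (Fin 2) ℝ) k i j
      = ∑ s, u s k * v s i * w s j

private lemma rank1_of_det {c00 c01 c10 c11 : ℝ} (h : c00 * c11 - c01 * c10 = 0) :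
    ∃ v0 v1 w0 w1 : ℝ, c00 = v0 * w0 ∧ c01 = v0 * w1 ∧ c10 = v1 * w0 ∧ c11 = v1 * w1 := by
  by_cases h0 : c00 = 0
  · by_cases h1 : c01 = 0
    · exact ⟨0, 1, c10, c11, by simp [h0], by simp [h1], by ring, by ring⟩
    · have h10 : c10 = 0 := by
        have : c01 * c10 = 0 := by rw [h0] at h; linear_combination -h
        rcases mul_eq_zero.mp this with h' | h'
        · exact absurd h' h1
        · exact h'
      exact ⟨1, c11 / c01, 0, c01, by simp [h0], by simp, by simp [h10], by field_simp⟩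
  · refine ⟨c00, c10, 1, c01 / c00, by ring, by field_simp, by ring, ?_⟩
    field_simp
    linarith

private lemma dep2 {x00 x01 x10 x11 : ℝ} (h : x00 * x11 - x01 * x10 = 0) :
    ∃ γ δ : ℝ, ¬(γ = 0 ∧ δ = 0) ∧ γ * x00 + δ * x01 = 0 ∧ γ * x10 + δ * x11 = 0 := by
  by_cases h1 : x10 = 0 ∧ x11 = 0
  · by_cases h2 : x00 = 0 ∧ x01 = 0
    · exact ⟨1, 0, by simp, by simp [h2.1], by simp [h1.1]⟩
    · exact ⟨x01, -x00, by rintro ⟨e1, e2⟩; exact h2 ⟨by linarith, e1⟩,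
        by ring, by rw [h1.1, h1.2]; ring⟩
  · exact ⟨x11, -x10, by rintro ⟨e1, e2⟩; exact h1 ⟨by linarith, e1⟩,
      by linarith [h], by ring⟩

private lemma root_of_nonneg {dA c dB : ℝ} (h : 0 ≤ c ^ 2 - 4 * dA * dB) :
    ∃ x y : ℝ, ¬(x = 0 ∧ y = 0) ∧ dA * x ^ 2 + c * (x * y) + dB * y ^ 2 = 0 := by
  by_cases hB : dB = 0
  · exact ⟨0, 1, by simp, by simp [hB]⟩
  · refine ⟨2 * dB, -c + Real.sqrt (c ^ 2 - 4 * dA * dB), fun hx => hB (by linarith [hx.1]), ?_⟩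
    have hs : Real.sqrt (c ^ 2 - 4 * dA * dB) ^ 2 = c ^ 2 - 4 * dA * dB := Real.sq_sqrt h
    linear_combination dB * hs

private lemma roots2_of_pos {dA c dB : ℝ} (h : 0 < c ^ 2 - 4 * dA * dB) :
    ∃ x₁ y₁ x₂ y₂ : ℝ, x₁ * y₂ - x₂ * y₁ ≠ 0 ∧
      dA * x₁ ^ 2 + c * (x₁ * y₁) + dB * y₁ ^ 2 = 0 ∧
      dA * x₂ ^ 2 + c * (x₂ * y₂) + dB * y₂ ^ 2 = 0 := by
  by_cases hB : dB = 0
  · have hc : c ≠ 0 := by intro h0; rw [h0, hB] at h; nlinarith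
    exact ⟨0, 1, c, -dA, by simpa using hc, by simp [hB], by rw [hB]; ring⟩
  · have hpos : 0 < Real.sqrt (c ^ 2 - 4 * dA * dB) := Real.sqrt_pos.mpr h
    have hs : Real.sqrt (c ^ 2 - 4 * dA * dB) ^ 2 = c ^ 2 - 4 * dA * dB :=
      Real.sq_sqrt h.le
    refine ⟨2 * dB, -c + Real.sqrt (c ^ 2 - 4 * dA * dB),
            2 * dB, -c - Real.sqrt (c ^ 2 - 4 * dA * dB), ?_, by linear_combination dB * hs, by linear_combination dB * hs⟩
    have : 2 * dB * (-c - Real.sqrt (c ^ 2 - 4 * dA * dB)) -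
        2 * dB * (-c + Real.sqrt (c ^ 2 - 4 * dA * dB))
        = -4 * dB * Real.sqrt (c ^ 2 - 4 * dA * dB) := by ring
    rw [this]
    intro h0
    rcases mul_eq_zero.mp h0 with h' | h'
    · rcases mul_eq_zero.mp h' with h'' | h'' <;> simp_all <;> linarith
    · exact absurd h' (ne_of_gt hpos)

private lemma dc_two_kprop {a₁ a₂ b₁ b₂ : Fin 2 → ℝ} {c : ℝ}
    (h1 : ∀ i, b₁ i = c * a₁ i) (h2 : ∀ i, b₂ i = c * a₂ i) :
    dc a₁ a₂ b₁ b₂ 2 := by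
  refine ⟨![![1, c], ![1, c]], ![a₁, a₂], ![![1, 0], ![0, 1]], ?_⟩
  intro k i j
  fin_cases k <;> fin_cases i <;> fin_cases j <;>
    simp [col2, Fin.sum_univ_two, h1 0, h1 1, h2 0, h2 1] <;> ring

private lemma dc_two_kprop' {a₁ a₂ b₁ b₂ : Fin 2 → ℝ} {c : ℝ}
    (h1 : ∀ i, a₁ i = c * b₁ i) (h2 : ∀ i, a₂ i = c * b₂ i) :
    dc a₁ a₂ b₁ b₂ 2 := by
  refine ⟨![![c, 1], ![c, 1]], ![b₁, b₂], ![![1, 0], ![0, 1]], ?_⟩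
  intro k i j
  fin_cases k <;> fin_cases i <;> fin_cases j <;>
    simp [col2, Fin.sum_univ_two, h1 0, h1 1, h2 0, h2 1] <;> ring

-- slices proportional in j direction : (a₂,b₂) = c • (a₁,b₁)

private lemma dc_two_jprop {a₁ a₂ b₁ b₂ : Fin 2 → ℝ} {c : ℝ}
    (h1 : ∀ i, a₂ i = c * a₁ i) (h2 : ∀ i, b₂ i = c * b₁ i) :
    dc a₁ a₂ b₁ b₂ 2 := by
  refine ⟨![![1, 0], ![0, 1]], ![a₁, b₁], ![![1, c], ![1, c]], ?_⟩
  intro k i j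
  fin_cases k <;> fin_cases i <;> fin_cases j <;>
    simp [col2, Fin.sum_univ_two, h1 0, h1 1, h2 0, h2 1] <;> ring

private lemma dc_two_jprop' {a₁ a₂ b₁ b₂ : Fin 2 → ℝ} {c : ℝ}
    (h1 : ∀ i, a₁ i = c * a₂ i) (h2 : ∀ i, b₁ i = c * b₂ i) :
    dc a₁ a₂ b₁ b₂ 2 := by
  refine ⟨![![1, 0], ![0, 1]], ![a₂, b₂], ![![c, 1], ![c, 1]], ?_⟩
  intro k i j
  fin_cases k <;> fin_cases i <;> fin_cases j <;>
    simp [col2, Fin.sum_univ_two, h1 0, h1 1, h2 0, h2 1] <;> ring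

private lemma dc_two_roots {a₁ a₂ b₁ b₂ : Fin 2 → ℝ} {x₁ y₁ x₂ y₂ : ℝ}
    (hd : x₁ * y₂ - x₂ * y₁ ≠ 0)
    (hr1 : (a₁ 0 * a₂ 1 - a₂ 0 * a₁ 1) * x₁ ^ 2
      + (a₁ 0 * b₂ 1 + b₁ 0 * a₂ 1 - a₂ 0 * b₁ 1 - b₂ 0 * a₁ 1) * (x₁ * y₁)
      + (b₁ 0 * b₂ 1 - b₂ 0 * b₁ 1) * y₁ ^ 2 = 0)
    (hr2 : (a₁ 0 * a₂ 1 - a₂ 0 * a₁ 1) * x₂ ^ 2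
      + (a₁ 0 * b₂ 1 + b₁ 0 * a₂ 1 - a₂ 0 * b₁ 1 - b₂ 0 * a₁ 1) * (x₂ * y₂)
      + (b₁ 0 * b₂ 1 - b₂ 0 * b₁ 1) * y₂ ^ 2 = 0) :
    dc a₁ a₂ b₁ b₂ 2 := by
  obtain ⟨v0, v1, w0, w1, e1, e2, e3, e4⟩ := rank1_of_det (c00 := x₁ * a₁ 0 + y₁ * b₁ 0)
    (c01 := x₁ * a₂ 0 + y₁ * b₂ 0) (c10 := x₁ * a₁ 1 + y₁ * b₁ 1)
    (c11 := x₁ * a₂ 1 + y₁ * b₂ 1) (by linear_combination hr1)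
  obtain ⟨p0, p1, q0, q1, f1, f2, f3, f4⟩ := rank1_of_det (c00 := x₂ * a₁ 0 + y₂ * b₁ 0)
    (c01 := x₂ * a₂ 0 + y₂ * b₂ 0) (c10 := x₂ * a₁ 1 + y₂ * b₁ 1)
    (c11 := x₂ * a₂ 1 + y₂ * b₂ 1) (by linear_combination hr2)
  have K1 : ∀ a b : ℝ, a = y₂ / (x₁ * y₂ - x₂ * y₁) * (x₁ * a + y₁ * b)
      - y₁ / (x₁ * y₂ - x₂ * y₁) * (x₂ * a + y₂ * b) := by
    intro a b; rw [div_mul_eq_mul_div, div_mul_eq_mul_div, ← sub_div, eq_div_iff hd]; ring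
  have K2 : ∀ a b : ℝ, b = -x₂ / (x₁ * y₂ - x₂ * y₁) * (x₁ * a + y₁ * b)
      + x₁ / (x₁ * y₂ - x₂ * y₁) * (x₂ * a + y₂ * b) := by
    intro a b; field_simp; ring
  refine ⟨![![y₂ / (x₁ * y₂ - x₂ * y₁), -x₂ / (x₁ * y₂ - x₂ * y₁)],
            ![-y₁ / (x₁ * y₂ - x₂ * y₁), x₁ / (x₁ * y₂ - x₂ * y₁)]],
          ![![v0, v1], ![p0, p1]], ![![w0, w1], ![q0, q1]], ?_⟩
  intro k i j
  fin_cases k <;> fin_cases i <;> fin_cases j <;> simp [col2, Fin.sum_univ_two]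
  · linear_combination K1 (a₁ 0) (b₁ 0) + y₂ / (x₁ * y₂ - x₂ * y₁) * e1
      - y₁ / (x₁ * y₂ - x₂ * y₁) * f1
  · linear_combination K1 (a₂ 0) (b₂ 0) + y₂ / (x₁ * y₂ - x₂ * y₁) * e2
      - y₁ / (x₁ * y₂ - x₂ * y₁) * f2
  · linear_combination K1 (a₁ 1) (b₁ 1) + y₂ / (x₁ * y₂ - x₂ * y₁) * e3
      - y₁ / (x₁ * y₂ - x₂ * y₁) * f3
  · linear_combination K1 (a₂ 1) (b₂ 1) + y₂ / (x₁ * y₂ - x₂ * y₁) * e4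
      - y₁ / (x₁ * y₂ - x₂ * y₁) * f4
  · linear_combination K2 (a₁ 0) (b₁ 0) - x₂ / (x₁ * y₂ - x₂ * y₁) * e1
      + x₁ / (x₁ * y₂ - x₂ * y₁) * f1
  · linear_combination K2 (a₂ 0) (b₂ 0) - x₂ / (x₁ * y₂ - x₂ * y₁) * e2
      + x₁ / (x₁ * y₂ - x₂ * y₁) * f2
  · linear_combination K2 (a₁ 1) (b₁ 1) - x₂ / (x₁ * y₂ - x₂ * y₁) * e3
      + x₁ / (x₁ * y₂ - x₂ * y₁) * f3
  · linear_combination K2 (a₂ 1) (b₂ 1) - x₂ / (x₁ * y₂ - x₂ * y₁) * e4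
      + x₁ / (x₁ * y₂ - x₂ * y₁) * f4

private lemma dc_three_root {a₁ a₂ b₁ b₂ : Fin 2 → ℝ} {x y : ℝ}
    (hn : ¬(x = 0 ∧ y = 0))
    (hr : (a₁ 0 * a₂ 1 - a₂ 0 * a₁ 1) * x ^ 2
      + (a₁ 0 * b₂ 1 + b₁ 0 * a₂ 1 - a₂ 0 * b₁ 1 - b₂ 0 * a₁ 1) * (x * y)
      + (b₁ 0 * b₂ 1 - b₂ 0 * b₁ 1) * y ^ 2 = 0) :
    dc a₁ a₂ b₁ b₂ 3 := by
  have hn0 : x ^ 2 + y ^ 2 ≠ 0 := by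
    rcases not_and_or.mp hn with h | h <;> positivity
  obtain ⟨v0, v1, w0, w1, e1, e2, e3, e4⟩ := rank1_of_det (c00 := x * a₁ 0 + y * b₁ 0)
    (c01 := x * a₂ 0 + y * b₂ 0) (c10 := x * a₁ 1 + y * b₁ 1)
    (c11 := x * a₂ 1 + y * b₂ 1) (by linear_combination hr)
  obtain ⟨P, hP⟩ : ∃ t : ℝ, t = x / (x ^ 2 + y ^ 2) := ⟨_, rfl⟩
  obtain ⟨Q, hQ⟩ : ∃ t : ℝ, t = y / (x ^ 2 + y ^ 2) := ⟨_, rfl⟩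
  have K1 : ∀ a b : ℝ, a = P * (x * a + y * b) - Q * (-y * a + x * b) := by
    intro a b; rw [hP, hQ]; field_simp; ring
  have K2 : ∀ a b : ℝ, b = Q * (x * a + y * b) + P * (-y * a + x * b) := by
    intro a b; rw [hP, hQ]; field_simp; ring
  refine ⟨![![P, Q], ![-Q, P], ![-Q, P]],
          ![![v0, v1],
            ![-y * a₁ 0 + x * b₁ 0, -y * a₁ 1 + x * b₁ 1],
            ![-y * a₂ 0 + x * b₂ 0, -y * a₂ 1 + x * b₂ 1]],
          ![![w0, w1], ![1, 0], ![0, 1]], ?_⟩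
  intro k i j
  fin_cases k <;> fin_cases i <;> fin_cases j <;> simp [col2, Fin.sum_univ_three, Matrix.vecHead, Matrix.vecTail]
  · linear_combination K1 (a₁ 0) (b₁ 0) + P * e1
  · linear_combination K1 (a₂ 0) (b₂ 0) + P * e2
  · linear_combination K1 (a₁ 1) (b₁ 1) + P * e3
  · linear_combination K1 (a₂ 1) (b₂ 1) + P * e4
  · linear_combination K2 (a₁ 0) (b₁ 0) + Q * e1
  · linear_combination K2 (a₂ 0) (b₂ 0) + Q * e2
  · linear_combination K2 (a₁ 1) (b₁ 1) + Q * e3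
  · linear_combination K2 (a₂ 1) (b₂ 1) + Q * e4

private lemma dc_two_deg {a₁ a₂ b₁ b₂ : Fin 2 → ℝ}
    (hΔ : (a₁ 0 * b₂ 1 + b₁ 0 * a₂ 1 - a₂ 0 * b₁ 1 - b₂ 0 * a₁ 1) ^ 2
      - 4 * (a₁ 0 * a₂ 1 - a₂ 0 * a₁ 1) * (b₁ 0 * b₂ 1 - b₂ 0 * b₁ 1) = 0)
    (hΘ : (a₁ 0 * b₁ 1 - b₁ 0 * a₁ 1) + (a₂ 0 * b₂ 1 - b₂ 0 * a₂ 1) = 0) :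
    dc a₁ a₂ b₁ b₂ 2 := by
  have hkey : (a₁ 0 * b₂ 1 + a₂ 0 * b₁ 1 - a₁ 1 * b₂ 0 - a₂ 1 * b₁ 0) ^ 2
      - 4 * (a₁ 0 * b₁ 1 - a₁ 1 * b₁ 0) * (a₂ 0 * b₂ 1 - a₂ 1 * b₂ 0) = 0 := by
    linear_combination hΔ
  have hd0 : a₁ 0 * b₁ 1 - a₁ 1 * b₁ 0 = 0 := by nlinarith [hkey, hΘ, sq_nonneg (a₁ 0 * b₂ 1 + a₂ 0 * b₁ 1 - a₁ 1 * b₂ 0 - a₂ 1 * b₁ 0), sq_nonneg (a₁ 0 * b₁ 1 - a₁ 1 * b₁ 0)]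
  have hd1 : a₂ 0 * b₂ 1 - a₂ 1 * b₂ 0 = 0 := by linarith [hΘ, hd0]
  obtain ⟨p0, p1, q0, q1, e1, e2, e3, e4⟩ := rank1_of_det (c00 := a₁ 0) (c01 := a₁ 1)
    (c10 := b₁ 0) (c11 := b₁ 1) (by linear_combination hd0)
  obtain ⟨p0', p1', q0', q1', f1, f2, f3, f4⟩ := rank1_of_det (c00 := a₂ 0) (c01 := a₂ 1)
    (c10 := b₂ 0) (c11 := b₂ 1) (by linear_combination hd1)
  refine ⟨![![p0, p1], ![p0', p1']], ![![q0, q1], ![q0', q1']], ![![1, 0], ![0, 1]], ?_⟩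
  intro k i j
  fin_cases k <;> fin_cases i <;> fin_cases j <;> simp [col2, Fin.sum_univ_two]
  · linear_combination e1
  · linear_combination f1
  · linear_combination e2
  · linear_combination f2
  · linear_combination e3
  · linear_combination f3
  · linear_combination e4
  · linear_combination f4

private lemma dc_three_cm {a₁ a₂ b₁ b₂ : Fin 2 → ℝ} {m00 m01 m10 m11 β R : ℝ}
    (hβ : 4 * β ^ 2 = -((m00 - m11) ^ 2) - 4 * (m01 * m10))
    (hR : m10 * R = 1)
    (ha00 : a₁ 0 = m00 * b₁ 0 + m01 * b₁ 1)
    (ha01 : a₂ 0 = m00 * b₂ 0 + m01 * b₂ 1)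
    (ha10 : a₁ 1 = m10 * b₁ 0 + m11 * b₁ 1)
    (ha11 : a₂ 1 = m10 * b₂ 0 + m11 * b₂ 1) :
    dc a₁ a₂ b₁ b₂ 3 := by
  refine ⟨![![(m00 + m11) / 2 - β, 1], ![-((m00 + m11) / 2) - β, -1], ![1, 0]],
          ![![1, 0], ![(m00 - m11) / 2, m10], ![β + (m00 - m11) / 2, m10]],
          ![![b₁ 0 - (m00 - m11) / 2 * R * b₁ 1, b₂ 0 - (m00 - m11) / 2 * R * b₂ 1],
            ![-(R * b₁ 1), -(R * b₂ 1)],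
            ![b₁ 0 - (m00 - m11 + 2 * β) / 2 * R * b₁ 1,
              b₂ 0 - (m00 - m11 + 2 * β) / 2 * R * b₂ 1]], ?_⟩
  intro k i j
  fin_cases k <;> fin_cases i <;> fin_cases j <;>
    simp [col2, Fin.sum_univ_three, Matrix.vecHead, Matrix.vecTail]
  · linear_combination ha00 + R * b₁ 1 / 4 * hβ - m01 * b₁ 1 * hR
  · linear_combination ha01 + R * b₂ 1 / 4 * hβ - m01 * b₂ 1 * hR
  · linear_combination ha10 - m11 * b₁ 1 * hR
  · linear_combination ha11 - m11 * b₂ 1 * hR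
  · ring
  · ring
  · linear_combination -b₁ 1 * hR
  · linear_combination -b₂ 1 * hR

private lemma dc_three_neg {a₁ a₂ b₁ b₂ : Fin 2 → ℝ}
    (hΔ : (a₁ 0 * b₂ 1 + b₁ 0 * a₂ 1 - a₂ 0 * b₁ 1 - b₂ 0 * a₁ 1) ^ 2
      - 4 * (a₁ 0 * a₂ 1 - a₂ 0 * a₁ 1) * (b₁ 0 * b₂ 1 - b₂ 0 * b₁ 1) < 0) :
    dc a₁ a₂ b₁ b₂ 3 := by
  obtain ⟨dA, hdA⟩ : ∃ t : ℝ, t = a₁ 0 * a₂ 1 - a₂ 0 * a₁ 1 := ⟨_, rfl⟩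
  obtain ⟨dB, hdB⟩ : ∃ t : ℝ, t = b₁ 0 * b₂ 1 - b₂ 0 * b₁ 1 := ⟨_, rfl⟩
  obtain ⟨c, hc⟩ : ∃ t : ℝ, t = a₁ 0 * b₂ 1 + b₁ 0 * a₂ 1 - a₂ 0 * b₁ 1 - b₂ 0 * a₁ 1 := ⟨_, rfl⟩
  rw [← hdA, ← hdB, ← hc] at hΔ
  have hdB0 : dB ≠ 0 := by intro h; rw [h] at hΔ; nlinarith
  have hpos : 0 < 4 * dA * dB - c ^ 2 := by linarith
  have hsq : Real.sqrt (4 * dA * dB - c ^ 2) ^ 2 = 4 * dA * dB - c ^ 2 :=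
    Real.sq_sqrt hpos.le
  have hsp : Real.sqrt (4 * dA * dB - c ^ 2) ≠ 0 := ne_of_gt (Real.sqrt_pos.mpr hpos)
  obtain ⟨β, hβd⟩ : ∃ t : ℝ, t = Real.sqrt (4 * dA * dB - c ^ 2) / (2 * dB) := ⟨_, rfl⟩
  have hβ0 : β ≠ 0 := by
    rw [hβd]
    exact div_ne_zero hsp (by simpa using hdB0)
  have hβsq : 4 * (dB * dB) * β ^ 2 = 4 * dA * dB - c ^ 2 := by
    rw [hβd, div_pow, hsq]; field_simp; ring
  obtain ⟨m00, hm00⟩ : ∃ t : ℝ, t = (a₁ 0 * b₂ 1 - a₂ 0 * b₁ 1) / dB := ⟨_, rfl⟩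
  obtain ⟨m01, hm01⟩ : ∃ t : ℝ, t = (a₂ 0 * b₁ 0 - a₁ 0 * b₂ 0) / dB := ⟨_, rfl⟩
  obtain ⟨m10, hm10⟩ : ∃ t : ℝ, t = (a₁ 1 * b₂ 1 - a₂ 1 * b₁ 1) / dB := ⟨_, rfl⟩
  obtain ⟨m11, hm11⟩ : ∃ t : ℝ, t = (a₂ 1 * b₁ 0 - a₁ 1 * b₂ 0) / dB := ⟨_, rfl⟩
  have hdBe : (b₁ 0 * b₂ 1 - b₂ 0 * b₁ 1 : ℝ) ≠ 0 := by rw [← hdB]; exact hdB0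
  have key : ((m00 - m11) ^ 2 + 4 * (m01 * m10)) * (dB * dB) = c ^ 2 - 4 * dA * dB := by
    rw [hm00, hm01, hm10, hm11, div_sub_div_same, div_pow, div_mul_div_comm, ← pow_two dB,
      ← mul_div_assoc, ← add_div, div_mul_cancel₀ _ (pow_ne_zero 2 hdB0), hc, hdA, hdB]
    ring
  have h4' : 4 * β ^ 2 * (dB * dB) = 4 * dA * dB - c ^ 2 := by linear_combination hβsq
  have hsum : (4 * β ^ 2 + ((m00 - m11) ^ 2 + 4 * (m01 * m10))) * (dB * dB) = 0 := by
    linear_combination h4' + key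
  have hβ : 4 * β ^ 2 = -((m00 - m11) ^ 2) - 4 * (m01 * m10) := by
    have h2 := (mul_eq_zero.mp hsum).resolve_right (mul_ne_zero hdB0 hdB0)
    linarith
  have hm100 : m10 ≠ 0 := by
    intro h
    rw [h] at hβ
    nlinarith [sq_nonneg (m00 - m11), sq_nonneg β,
      pow_eq_zero_iff (n := 2) (two_ne_zero) |>.not.mpr hβ0]
  refine dc_three_cm (m00 := m00) (m01 := m01) (m10 := m10) (m11 := m11) (β := β)
    (R := m10⁻¹) hβ (mul_inv_cancel₀ hm100) ?_ ?_ ?_ ?_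
  · rw [hm00, hm01]; field_simp; linear_combination a₁ 0 * hdB
  · rw [hm00, hm01]; field_simp; linear_combination a₂ 0 * hdB
  · rw [hm10, hm11]; field_simp; linear_combination a₁ 1 * hdB
  · rw [hm10, hm11]; field_simp; linear_combination a₂ 1 * hdB

private lemma li_append_contra {x1 x2 y1 y2 : Fin 2 → ℝ}
    (h : LinearIndependent ℝ ![Fin.append x1 x2, Fin.append y1 y2])
    {γ δ : ℝ} (hne : ¬(γ = 0 ∧ δ = 0))
    (h1 : ∀ i, γ * x1 i + δ * y1 i = 0) (h2 : ∀ i, γ * x2 i + δ * y2 i = 0) : False := by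
  have := Fintype.linearIndependent_iff.mp h ![γ, δ] ?_
  · rcases not_and_or.mp hne with h' | h'
    · exact h' (this 0)
    · exact h' (this 1)
  · funext z
    simp [Fin.sum_univ_two]
    fin_cases z
    · exact h1 0
    · exact h1 1
    · exact h2 0
    · exact h2 1

private lemma not_dc_two {a₁ a₂ b₁ b₂ : Fin 2 → ℝ}
    (hLIk : LinearIndependent ℝ ![Fin.append a₁ a₂, Fin.append b₁ b₂])
    (hLIj : LinearIndependent ℝ ![Fin.append a₁ b₁, Fin.append a₂ b₂])
    (hΔ0 : (a₁ 0 * b₂ 1 + b₁ 0 * a₂ 1 - a₂ 0 * b₁ 1 - b₂ 0 * a₁ 1) ^ 2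
      - 4 * (a₁ 0 * a₂ 1 - a₂ 0 * a₁ 1) * (b₁ 0 * b₂ 1 - b₂ 0 * b₁ 1) = 0)
    (hΘ : (a₁ 0 * b₁ 1 - b₁ 0 * a₁ 1) + (a₂ 0 * b₂ 1 - b₂ 0 * a₂ 1) ≠ 0) :
    ¬ dc a₁ a₂ b₁ b₂ 2 := by
  rintro ⟨u, v, w, hT⟩
  have e000 : a₁ 0 = u 0 0 * v 0 0 * w 0 0 + u 1 0 * v 1 0 * w 1 0 := by
    simpa [col2, Fin.sum_univ_two] using hT 0 0 0
  have e010 : a₁ 1 = u 0 0 * v 0 1 * w 0 0 + u 1 0 * v 1 1 * w 1 0 := by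
    simpa [col2, Fin.sum_univ_two] using hT 0 1 0
  have e001 : a₂ 0 = u 0 0 * v 0 0 * w 0 1 + u 1 0 * v 1 0 * w 1 1 := by
    simpa [col2, Fin.sum_univ_two] using hT 0 0 1
  have e011 : a₂ 1 = u 0 0 * v 0 1 * w 0 1 + u 1 0 * v 1 1 * w 1 1 := by
    simpa [col2, Fin.sum_univ_two] using hT 0 1 1
  have e100 : b₁ 0 = u 0 1 * v 0 0 * w 0 0 + u 1 1 * v 1 0 * w 1 0 := by
    simpa [col2, Fin.sum_univ_two] using hT 1 0 0
  have e110 : b₁ 1 = u 0 1 * v 0 1 * w 0 0 + u 1 1 * v 1 1 * w 1 0 := by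
    simpa [col2, Fin.sum_univ_two] using hT 1 1 0
  have e101 : b₂ 0 = u 0 1 * v 0 0 * w 0 1 + u 1 1 * v 1 0 * w 1 1 := by
    simpa [col2, Fin.sum_univ_two] using hT 1 0 1
  have e111 : b₂ 1 = u 0 1 * v 0 1 * w 0 1 + u 1 1 * v 1 1 * w 1 1 := by
    simpa [col2, Fin.sum_univ_two] using hT 1 1 1
  have hsq : (a₁ 0 * b₂ 1 + b₁ 0 * a₂ 1 - a₂ 0 * b₁ 1 - b₂ 0 * a₁ 1) ^ 2
      - 4 * (a₁ 0 * a₂ 1 - a₂ 0 * a₁ 1) * (b₁ 0 * b₂ 1 - b₂ 0 * b₁ 1)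
      = ((u 0 0 * u 1 1 - u 0 1 * u 1 0) * (v 0 0 * v 1 1 - v 0 1 * v 1 0)
          * (w 0 0 * w 1 1 - w 0 1 * w 1 0)) ^ 2 := by
    rw [e000, e010, e001, e011, e100, e110, e101, e111]; ring
  have hTh : (a₁ 0 * b₁ 1 - b₁ 0 * a₁ 1) + (a₂ 0 * b₂ 1 - b₂ 0 * a₂ 1)
      = (u 0 0 * u 1 1 - u 0 1 * u 1 0) * (v 0 0 * v 1 1 - v 0 1 * v 1 0)
          * (w 0 0 * w 1 0 + w 0 1 * w 1 1) := by
    rw [e000, e010, e001, e011, e100, e110, e101, e111]; ring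
  rw [hΔ0] at hsq
  have hprod : (u 0 0 * u 1 1 - u 0 1 * u 1 0) * ((v 0 0 * v 1 1 - v 0 1 * v 1 0)
      * (w 0 0 * w 1 1 - w 0 1 * w 1 0)) = 0 := by
    have h2 : ((u 0 0 * u 1 1 - u 0 1 * u 1 0) * (v 0 0 * v 1 1 - v 0 1 * v 1 0)
        * (w 0 0 * w 1 1 - w 0 1 * w 1 0)) = 0 :=
      pow_eq_zero_iff two_ne_zero |>.mp hsq.symm
    linear_combination h2
  rcases mul_eq_zero.mp hprod with hU | hVW
  · -- u columns dependent, contradicts hLIk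
    obtain ⟨γ, δ, hne, h1, h2⟩ := dep2 (x00 := u 0 0) (x01 := u 0 1)
      (x10 := u 1 0) (x11 := u 1 1) (by linear_combination hU)
    refine li_append_contra hLIk hne ?_ ?_
    · intro i
      have g0 : γ * a₁ 0 + δ * b₁ 0 = 0 := by
        linear_combination γ * e000 + δ * e100 + v 0 0 * w 0 0 * h1 + v 1 0 * w 1 0 * h2
      have g1 : γ * a₁ 1 + δ * b₁ 1 = 0 := by
        linear_combination γ * e010 + δ * e110 + v 0 1 * w 0 0 * h1 + v 1 1 * w 1 0 * h2
      fin_cases i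
      · exact g0
      · exact g1
    · intro i
      have g0 : γ * a₂ 0 + δ * b₂ 0 = 0 := by
        linear_combination γ * e001 + δ * e101 + v 0 0 * w 0 1 * h1 + v 1 0 * w 1 1 * h2
      have g1 : γ * a₂ 1 + δ * b₂ 1 = 0 := by
        linear_combination γ * e011 + δ * e111 + v 0 1 * w 0 1 * h1 + v 1 1 * w 1 1 * h2
      fin_cases i
      · exact g0
      · exact g1
  rcases mul_eq_zero.mp hVW with hV | hW
  · -- v dependent : Θ = 0
    exact hΘ (by rw [hTh, hV]; ring)
  · -- w columns dependent, contradicts hLIj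
    obtain ⟨γ, δ, hne, h1, h2⟩ := dep2 (x00 := w 0 0) (x01 := w 0 1)
      (x10 := w 1 0) (x11 := w 1 1) (by linear_combination hW)
    refine li_append_contra hLIj hne ?_ ?_
    · intro i
      have g0 : γ * a₁ 0 + δ * a₂ 0 = 0 := by
        linear_combination γ * e000 + δ * e001 + u 0 0 * v 0 0 * h1 + u 1 0 * v 1 0 * h2
      have g1 : γ * a₁ 1 + δ * a₂ 1 = 0 := by
        linear_combination γ * e010 + δ * e011 + u 0 0 * v 0 1 * h1 + u 1 0 * v 1 1 * h2
      fin_cases i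
      · exact g0
      · exact g1
    · intro i
      have g0 : γ * b₁ 0 + δ * b₂ 0 = 0 := by
        linear_combination γ * e100 + δ * e101 + u 0 1 * v 0 0 * h1 + u 1 1 * v 1 0 * h2
      have g1 : γ * b₁ 1 + δ * b₂ 1 = 0 := by
        linear_combination γ * e110 + δ * e111 + u 0 1 * v 0 1 * h1 + u 1 1 * v 1 1 * h2
      fin_cases i
      · exact g0
      · exact g1

private lemma not_dc_two_neg {a₁ a₂ b₁ b₂ : Fin 2 → ℝ}
    (hΔ : (a₁ 0 * b₂ 1 + b₁ 0 * a₂ 1 - a₂ 0 * b₁ 1 - b₂ 0 * a₁ 1) ^ 2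
      - 4 * (a₁ 0 * a₂ 1 - a₂ 0 * a₁ 1) * (b₁ 0 * b₂ 1 - b₂ 0 * b₁ 1) < 0) :
    ¬ dc a₁ a₂ b₁ b₂ 2 := by
  rintro ⟨u, v, w, hT⟩
  have e000 : a₁ 0 = u 0 0 * v 0 0 * w 0 0 + u 1 0 * v 1 0 * w 1 0 := by
    simpa [col2, Fin.sum_univ_two] using hT 0 0 0
  have e010 : a₁ 1 = u 0 0 * v 0 1 * w 0 0 + u 1 0 * v 1 1 * w 1 0 := by
    simpa [col2, Fin.sum_univ_two] using hT 0 1 0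
  have e001 : a₂ 0 = u 0 0 * v 0 0 * w 0 1 + u 1 0 * v 1 0 * w 1 1 := by
    simpa [col2, Fin.sum_univ_two] using hT 0 0 1
  have e011 : a₂ 1 = u 0 0 * v 0 1 * w 0 1 + u 1 0 * v 1 1 * w 1 1 := by
    simpa [col2, Fin.sum_univ_two] using hT 0 1 1
  have e100 : b₁ 0 = u 0 1 * v 0 0 * w 0 0 + u 1 1 * v 1 0 * w 1 0 := by
    simpa [col2, Fin.sum_univ_two] using hT 1 0 0
  have e110 : b₁ 1 = u 0 1 * v 0 1 * w 0 0 + u 1 1 * v 1 1 * w 1 0 := by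
    simpa [col2, Fin.sum_univ_two] using hT 1 1 0
  have e101 : b₂ 0 = u 0 1 * v 0 0 * w 0 1 + u 1 1 * v 1 0 * w 1 1 := by
    simpa [col2, Fin.sum_univ_two] using hT 1 0 1
  have e111 : b₂ 1 = u 0 1 * v 0 1 * w 0 1 + u 1 1 * v 1 1 * w 1 1 := by
    simpa [col2, Fin.sum_univ_two] using hT 1 1 1
  have hsq : (a₁ 0 * b₂ 1 + b₁ 0 * a₂ 1 - a₂ 0 * b₁ 1 - b₂ 0 * a₁ 1) ^ 2
      - 4 * (a₁ 0 * a₂ 1 - a₂ 0 * a₁ 1) * (b₁ 0 * b₂ 1 - b₂ 0 * b₁ 1)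
      = ((u 0 0 * u 1 1 - u 0 1 * u 1 0) * (v 0 0 * v 1 1 - v 0 1 * v 1 0)
          * (w 0 0 * w 1 1 - w 0 1 * w 1 0)) ^ 2 := by
    rw [e000, e010, e001, e011, e100, e110, e101, e111]; ring
  nlinarith [sq_nonneg ((u 0 0 * u 1 1 - u 0 1 * u 1 0) * (v 0 0 * v 1 1 - v 0 1 * v 1 0)
    * (w 0 0 * w 1 1 - w 0 1 * w 1 0))]

private lemma dc_succ {a₁ a₂ b₁ b₂ : Fin 2 → ℝ} {r : ℕ} (h : dc a₁ a₂ b₁ b₂ r) :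
    dc a₁ a₂ b₁ b₂ (r + 1) := by
  obtain ⟨u, v, w, hT⟩ := h
  refine ⟨Fin.snoc u 0, Fin.snoc v 0, Fin.snoc w 0, ?_⟩
  intro k i j
  rw [Fin.sum_univ_castSucc]
  simpa [Fin.snoc_castSucc, Fin.snoc_last] using hT k i j

private lemma dc_mono {a₁ a₂ b₁ b₂ : Fin 2 → ℝ} {r r' : ℕ} (h : r ≤ r')
    (hd : dc a₁ a₂ b₁ b₂ r) : dc a₁ a₂ b₁ b₂ r' := by
  induction h with
  | refl => exact hd
  | step _ ih => exact dc_succ ih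

private lemma not_li_append {x1 x2 y1 y2 : Fin 2 → ℝ}
    (h : ¬ LinearIndependent ℝ ![Fin.append x1 x2, Fin.append y1 y2]) :
    ∃ γ δ : ℝ, ¬(γ = 0 ∧ δ = 0) ∧ (∀ i, γ * x1 i + δ * y1 i = 0)
      ∧ (∀ i, γ * x2 i + δ * y2 i = 0) := by
  obtain ⟨g, hg, i, hi⟩ := Fintype.not_linearIndependent_iff.mp h
  refine ⟨g 0, g 1, ?_, ?_, ?_⟩
  · rintro ⟨h0, h1⟩
    fin_cases i
    · exact hi h0
    · exact hi h1
  · intro i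
    have h0 := congrFun hg (Fin.castAdd 2 i)
    simp only [Finset.sum_apply, Pi.smul_apply, Fin.sum_univ_two, Matrix.cons_val_zero,
      Matrix.cons_val_one, Matrix.head_cons, Fin.append_left, smul_eq_mul, Pi.zero_apply] at h0
    exact h0
  · intro i
    have h0 := congrFun hg (Fin.natAdd 2 i)
    simp only [Finset.sum_apply, Pi.smul_apply, Fin.sum_univ_two, Matrix.cons_val_zero,
      Matrix.cons_val_one, Matrix.head_cons, Fin.append_right, smul_eq_mul, Pi.zero_apply] at h0
    exact h0

theorem stmt10 (a₁ a₂ b₁ b₂ : Fin 2 → ℝ) :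
    trank3 ![col2 a₁ a₂, col2 b₁ b₂] = 3 ↔
      Delta (col2 a₁ a₂) (col2 b₁ b₂) < 0 ∨
      (LinearIndependent ℝ ![Fin.append a₁ a₂, Fin.append b₁ b₂] ∧
       LinearIndependent ℝ ![Fin.append a₁ b₁, Fin.append a₂ b₂] ∧
       Delta (col2 a₁ a₂) (col2 b₁ b₂) = 0 ∧
       (col2 a₁ b₁).det + (col2 a₂ b₂).det ≠ 0) := by
  have hDe : Delta (col2 a₁ a₂) (col2 b₁ b₂)
      = (a₁ 0 * b₂ 1 + b₁ 0 * a₂ 1 - a₂ 0 * b₁ 1 - b₂ 0 * a₁ 1) ^ 2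
        - 4 * (a₁ 0 * a₂ 1 - a₂ 0 * a₁ 1) * (b₁ 0 * b₂ 1 - b₂ 0 * b₁ 1) := by
    simp [Delta, col2, Matrix.det_fin_two]
    ring
  have hThe : (col2 a₁ b₁).det + (col2 a₂ b₂).det
      = (a₁ 0 * b₁ 1 - b₁ 0 * a₁ 1) + (a₂ 0 * b₂ 1 - b₂ 0 * a₂ 1) := by
    simp [col2, Matrix.det_fin_two]
  have hset : trank3 ![col2 a₁ a₂, col2 b₁ b₂] = sInf {r | dc a₁ a₂ b₁ b₂ r} := rfl
  rw [hset, hDe, hThe]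
  constructor
  · -- rank 3 → conditions
    intro h3
    by_contra hP
    rw [not_or] at hP
    obtain ⟨hΔlt, hrest⟩ := hP
    have hΔge : (0:ℝ) ≤ (a₁ 0 * b₂ 1 + b₁ 0 * a₂ 1 - a₂ 0 * b₁ 1 - b₂ 0 * a₁ 1) ^ 2
        - 4 * (a₁ 0 * a₂ 1 - a₂ 0 * a₁ 1) * (b₁ 0 * b₂ 1 - b₂ 0 * b₁ 1) := not_lt.mp hΔlt
    have h2 : dc a₁ a₂ b₁ b₂ 2 := by
      by_cases hΔ0 : (a₁ 0 * b₂ 1 + b₁ 0 * a₂ 1 - a₂ 0 * b₁ 1 - b₂ 0 * a₁ 1) ^ 2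
          - 4 * (a₁ 0 * a₂ 1 - a₂ 0 * a₁ 1) * (b₁ 0 * b₂ 1 - b₂ 0 * b₁ 1) = 0
      · by_cases hk : LinearIndependent ℝ ![Fin.append a₁ a₂, Fin.append b₁ b₂]
        · by_cases hj : LinearIndependent ℝ ![Fin.append a₁ b₁, Fin.append a₂ b₂]
          · have hΘ0 : (a₁ 0 * b₁ 1 - b₁ 0 * a₁ 1) + (a₂ 0 * b₂ 1 - b₂ 0 * a₂ 1) = 0 := by
              by_contra hΘ
              exact hrest ⟨hk, hj, hΔ0, hΘ⟩
            exact dc_two_deg hΔ0 hΘ0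
          · obtain ⟨γ, δ, hne, hr1, hr2⟩ := not_li_append hj
            by_cases hδ : δ = 0
            · have hγ : γ ≠ 0 := fun h => hne ⟨h, hδ⟩
              refine dc_two_jprop' (c := 0) (fun i => ?_) (fun i => ?_)
              · have := hr1 i; rw [hδ] at this; simp at this
                rcases this with h | h
                · exact absurd h hγ
                · simp [h]
              · have := hr2 i; rw [hδ] at this; simp at this
                rcases this with h | h
                · exact absurd h hγ
                · simp [h]
            · refine dc_two_jprop (c := -γ / δ) (fun i => ?_) (fun i => ?_)
              · have := hr1 i; field_simp; linarith
              · have := hr2 i; field_simp; linarith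
        · obtain ⟨γ, δ, hne, hr1, hr2⟩ := not_li_append hk
          by_cases hδ : δ = 0
          · have hγ : γ ≠ 0 := fun h => hne ⟨h, hδ⟩
            refine dc_two_kprop' (c := 0) (fun i => ?_) (fun i => ?_)
            · have := hr1 i; rw [hδ] at this; simp at this
              rcases this with h | h
              · exact absurd h hγ
              · simp [h]
            · have := hr2 i; rw [hδ] at this; simp at this
              rcases this with h | h
              · exact absurd h hγ
              · simp [h]
          · refine dc_two_kprop (c := -γ / δ) (fun i => ?_) (fun i => ?_)
            · have := hr1 i; field_simp; linarith
            · have := hr2 i; field_simp; linarith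
      · have hΔpos : 0 < (a₁ 0 * b₂ 1 + b₁ 0 * a₂ 1 - a₂ 0 * b₁ 1 - b₂ 0 * a₁ 1) ^ 2
            - 4 * (a₁ 0 * a₂ 1 - a₂ 0 * a₁ 1) * (b₁ 0 * b₂ 1 - b₂ 0 * b₁ 1) :=
          lt_of_le_of_ne hΔge (Ne.symm hΔ0)
        obtain ⟨x₁, y₁, x₂, y₂, hd, hq1, hq2⟩ :=
          roots2_of_pos (dA := a₁ 0 * a₂ 1 - a₂ 0 * a₁ 1)
            (c := a₁ 0 * b₂ 1 + b₁ 0 * a₂ 1 - a₂ 0 * b₁ 1 - b₂ 0 * a₁ 1)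
            (dB := b₁ 0 * b₂ 1 - b₂ 0 * b₁ 1) hΔpos
        exact dc_two_roots hd hq1 hq2
    have hle : sInf {r | dc a₁ a₂ b₁ b₂ r} ≤ 2 := Nat.sInf_le h2
    omega
  · -- conditions → rank 3
    intro hP
    have h3mem : dc a₁ a₂ b₁ b₂ 3 := by
      rcases hP with hneg | ⟨hLIk, hLIj, hΔ0, hΘ⟩
      · exact dc_three_neg hneg
      · obtain ⟨x, y, hn, hr⟩ := root_of_nonneg (dA := a₁ 0 * a₂ 1 - a₂ 0 * a₁ 1)
          (c := a₁ 0 * b₂ 1 + b₁ 0 * a₂ 1 - a₂ 0 * b₁ 1 - b₂ 0 * a₁ 1)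
          (dB := b₁ 0 * b₂ 1 - b₂ 0 * b₁ 1) (by rw [hΔ0])
        exact dc_three_root hn (by linear_combination hr)
    have hno2 : ¬ dc a₁ a₂ b₁ b₂ 2 := by
      rcases hP with hneg | ⟨hLIk, hLIj, hΔ0, hΘ⟩
      · exact not_dc_two_neg hneg
      · exact not_dc_two hLIk hLIj hΔ0 hΘ
    refine le_antisymm (Nat.sInf_le h3mem) (le_csInf ⟨3, h3mem⟩ ?_)
    intro b hb
    by_contra hlt
    push_neg at hlt
    exact hno2 (dc_mono (by omega) hb)
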